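/- Let A be a unital algebra over a field of characteristic zero and R a Rota–Baxter operator of weight zero on A with R(1) ∈ F·1. Then R(1) = 0, R² = 0, and Im(R) ⊆ ker(R). -/
import Mathlib

/-- A Rota–Baxter operator of weight zero on a unital algebra over a
field of characteristic zero with `R(1) ∈ F·1` satisfies `R(1) = 0`, `R² = 0`,
and `Im R ⊆ ker R`. -/
theorem stmt6 {F A : Type*} [Field F] [CharZero F] [Ring A] [Algebra F A]
    (R : A →ₗ[F] A) (μ : F)
    (hR : ∀ a b : A, R a * R b = R (R a * b + a * R b))
    (h1 : R 1 = μ • (1 : A)) :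
    R 1 = 0 ∧ (∀ a : A, R (R a) = 0) ∧ ∀ a : A, R a ∈ LinearMap.ker R := by
  have key := hR 1 1
  rw [h1, one_mul, mul_one] at key
  have key2 : (μ * μ) • (1 : A) = (2 * μ * μ) • (1 : A) := by
    calc (μ * μ) • (1 : A) = μ • (1:A) * μ • (1:A) := by
          rw [smul_mul_assoc, mul_smul_comm, one_mul, smul_smul]
      _ = R (μ • (1:A) + μ • (1:A)) := key
      _ = (2 * μ * μ) • (1 : A) := by
          rw [← two_smul F (μ • (1:A)), map_smul, map_smul, h1, smul_smul, smul_smul]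
  have hmz : (μ * μ) • (1 : A) = 0 := by
    have h2 : (2 * μ * μ - μ * μ) • (1 : A) = 0 := by rw [sub_smul, key2, sub_self]
    have : 2 * μ * μ - μ * μ = μ * μ := by ring
    rwa [this] at h2
  have hz : R 1 = 0 := by
    rcases smul_eq_zero.mp hmz with h | h
    · rcases mul_self_eq_zero.mp h with rfl; simp [h1]
    · rw [h1]; rw [h]; simp
  have hsq : ∀ a : A, R (R a) = 0 := by
    intro a
    have := hR a 1
    rw [hz, mul_zero, mul_one, mul_zero, add_zero] at this
    exact this.symm
  exact ⟨hz, hsq, fun a => hsq a⟩
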